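/- Fix a tuple X = (x_1, …, x_n) of vectors in ℝ^d, scalars ρ, α ∈ ℝ, and a matrix A ∈ ℝ^{d×d}. Define the hardmax self-attention outputs SA^0_i(X) = ρ x_i + α M^0_i(X, A) and the softmax self-attention outputs SA^τ_i(X) = ρ x_i + α M^τ_i(X, A) for τ > 0. Suppose there exists ε > 0 such that ‖SA^0_i(X) − SA^0_{i'}(X)‖ > ε for all i ≠ i' (Euclidean norm). Then there exists τ₀ > 0 such that for all 0 < τ ≤ τ₀ and all i ≠ i', ‖SA^τ_i(X) − SA^τ_{i'}(X)‖ > ε/2; in particular the softmax outputs are pairwise distinct. -/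

import Mathlib

open Filter Topology Matrix

open Classical in
/-- Hardmax cluster set: indices `j` where `⟨A x_i, x_j⟩` attains its maximum over the tuple. -/
noncomputable def cluster {d n : ℕ} (X : Fin n → (Fin d → ℝ))
    (A : Matrix (Fin d) (Fin d) ℝ) (i : Fin n) : Finset (Fin n) :=
  Finset.univ.filter fun j => ∀ ℓ, A.mulVec (X i) ⬝ᵥ X ℓ ≤ A.mulVec (X i) ⬝ᵥ X j

/-- Hardmax average: `M^0_i(X,A) = (1/|C_i(X,A)|) Σ_{ℓ ∈ C_i(X,A)} x_ℓ`. -/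
noncomputable def hardmaxAvg {d n : ℕ} (X : Fin n → (Fin d → ℝ))
    (A : Matrix (Fin d) (Fin d) ℝ) (i : Fin n) : Fin d → ℝ :=
  ((cluster X A i).card : ℝ)⁻¹ • ∑ ℓ ∈ cluster X A i, X ℓ

/-- Softmax average with temperature `τ`: `M^τ_i(X,A) = Σ_ℓ π^τ_{iℓ}(X,A) x_ℓ`. -/
noncomputable def softmaxAvg {d n : ℕ} (τ : ℝ) (X : Fin n → (Fin d → ℝ))
    (A : Matrix (Fin d) (Fin d) ℝ) (i : Fin n) : Fin d → ℝ :=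
  ∑ ℓ, (Real.exp ((A.mulVec (X i) ⬝ᵥ X ℓ) / τ) /
    ∑ k, Real.exp ((A.mulVec (X i) ⬝ᵥ X k) / τ)) • X ℓ

/-- Euclidean norm on `ℝ^d` (viewed as `Fin d → ℝ`). -/
noncomputable def eucNorm {d : ℕ} (x : Fin d → ℝ) : ℝ :=
  Real.sqrt (∑ t, x t ^ 2)

lemma exp_div_tendsto_zero (c : ℝ) (hc : c < 0) :
    Tendsto (fun τ : ℝ => Real.exp (c / τ)) (𝓝[>] 0) (𝓝 0) := by
  have h0 : Tendsto (fun τ : ℝ => τ⁻¹) (𝓝[>] (0:ℝ)) atTop := tendsto_inv_nhdsGT_zero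
  have h1 : Tendsto (fun τ : ℝ => c / τ) (𝓝[>] (0:ℝ)) atBot := by
    simp only [div_eq_mul_inv]
    exact (tendsto_const_mul_atBot_of_neg hc).2 h0
  exact Real.tendsto_exp_atBot.comp h1

lemma softmaxAvg_tendsto {d n : ℕ} (hn : 0 < n) (X : Fin n → (Fin d → ℝ))
    (A : Matrix (Fin d) (Fin d) ℝ) (i : Fin n) :
    Tendsto (fun τ => softmaxAvg τ X A i) (𝓝[>] 0) (𝓝 (hardmaxAvg X A i)) := by
  classical
  set s : Fin n → ℝ := fun ℓ => A.mulVec (X i) ⬝ᵥ X ℓ with hs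
  have hne : (Finset.univ : Finset (Fin n)).Nonempty := ⟨⟨0, hn⟩, Finset.mem_univ _⟩
  set m := Finset.univ.sup' hne s with hm
  have hle : ∀ ℓ, s ℓ ≤ m := fun ℓ => Finset.le_sup' s (Finset.mem_univ ℓ)
  have hmem : ∀ j, j ∈ cluster X A i ↔ s j = m := by
    intro j
    constructor
    · intro hj
      rw [cluster, Finset.mem_filter] at hj
      exact le_antisymm (hle j) (Finset.sup'_le _ _ fun ℓ _ => hj.2 ℓ)
    · intro hj
      rw [cluster, Finset.mem_filter]
      exact ⟨Finset.mem_univ _, fun ℓ => (hle ℓ).trans_eq hj.symm⟩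
  have hcardpos : 0 < (cluster X A i).card := by
    obtain ⟨j, _, hj⟩ := Finset.exists_mem_eq_sup' hne s
    exact Finset.card_pos.2 ⟨j, (hmem j).2 hj.symm⟩
  have hcardne : ((cluster X A i).card : ℝ) ≠ 0 := by positivity
  -- weight limits
  have hw : ∀ ℓ, Tendsto (fun τ : ℝ => Real.exp (s ℓ / τ) / ∑ k, Real.exp (s k / τ))
      (𝓝[>] 0) (𝓝 ((if ℓ ∈ cluster X A i then (1:ℝ) else 0) / (cluster X A i).card)) := by
    intro ℓ
    have hnum : ∀ k, Tendsto (fun τ : ℝ => Real.exp ((s k - m) / τ)) (𝓝[>] 0)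
        (𝓝 (if k ∈ cluster X A i then (1:ℝ) else 0)) := by
      intro k
      by_cases h : k ∈ cluster X A i
      · have : s k - m = 0 := by rw [(hmem k).1 h]; ring
        simp [h, this]
      · have hlt : s k - m < 0 := sub_neg.2 (lt_of_le_of_ne (hle k) (fun e => h ((hmem k).2 e)))
        simpa [h] using exp_div_tendsto_zero _ hlt
    have hden : Tendsto (fun τ : ℝ => ∑ k, Real.exp ((s k - m) / τ)) (𝓝[>] 0)
        (𝓝 ((cluster X A i).card : ℝ)) := by
      have h1 := tendsto_finset_sum Finset.univ (fun k _ => hnum k)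
      have h2 : ∑ k, (if k ∈ cluster X A i then (1:ℝ) else 0) = ((cluster X A i).card : ℝ) := by
        simp [Finset.sum_ite_mem]
      rwa [h2] at h1
    have hdiv := (hnum ℓ).div hden hcardne
    refine hdiv.congr' ?_
    filter_upwards [self_mem_nhdsWithin] with τ (hτ : (0:ℝ) < τ)
    have hτ' : τ ≠ 0 := ne_of_gt hτ
    have he : ∀ k, Real.exp ((s k - m) / τ) = Real.exp (s k / τ) * Real.exp (-(m / τ)) := by
      intro k
      rw [← Real.exp_add]
      congr 1
      rw [sub_div]
      ring
    simp only [Pi.div_apply, he, ← Finset.sum_mul]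
    rw [mul_div_mul_right _ _ (Real.exp_ne_zero _)]
  -- hardmax as a full-sum
  have hhard : hardmaxAvg X A i
      = ∑ ℓ, (((if ℓ ∈ cluster X A i then (1:ℝ) else 0) / (cluster X A i).card)) • X ℓ := by
    rw [hardmaxAvg, Finset.smul_sum]
    rw [show (∑ ℓ, (((if ℓ ∈ cluster X A i then (1:ℝ) else 0) / (cluster X A i).card)) • X ℓ)
        = ∑ ℓ, (if ℓ ∈ cluster X A i then ((cluster X A i).card : ℝ)⁻¹ • X ℓ else 0) from ?_]
    · rw [Finset.sum_ite_mem, Finset.univ_inter]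
    · refine Finset.sum_congr rfl fun ℓ _ => ?_
      by_cases h : ℓ ∈ cluster X A i <;> simp [h, one_div]
  rw [hhard]
  exact tendsto_finset_sum _ (fun ℓ _ => (hw ℓ).smul_const (X ℓ))


/-- **Softmax self-attention preserves separation for small temperature.** If the hardmax
self-attention outputs `SA^0_i(X) = ρ x_i + α M^0_i(X,A)` are `ε`-separated, then for all
sufficiently small `τ > 0` the softmax outputs `SA^τ_i(X) = ρ x_i + α M^τ_i(X,A)` are
`ε/2`-separated; in particular they are pairwise distinct. -/
theorem softmax_preserves_separation {d n : ℕ} (X : Fin n → (Fin d → ℝ))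
    (ρ α : ℝ) (A : Matrix (Fin d) (Fin d) ℝ) (ε : ℝ) (hε : 0 < ε)
    (hsep : ∀ i i' : Fin n, i ≠ i' →
      ε < eucNorm ((ρ • X i + α • hardmaxAvg X A i) - (ρ • X i' + α • hardmaxAvg X A i'))) :
    ∃ τ₀ : ℝ, 0 < τ₀ ∧ ∀ τ : ℝ, 0 < τ → τ ≤ τ₀ → ∀ i i' : Fin n, i ≠ i' →
      ε / 2 < eucNorm ((ρ • X i + α • softmaxAvg τ X A i) -
        (ρ • X i' + α • softmaxAvg τ X A i')) := by
  rcases Nat.eq_zero_or_pos n with hn | hn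
  · subst hn
    exact ⟨1, one_pos, fun τ _ _ i => i.elim0⟩
  have henorm : Continuous (fun x : Fin d → ℝ => eucNorm x) := by
    unfold eucNorm
    fun_prop
  have key : ∀ᶠ τ in 𝓝[>] (0:ℝ), ∀ i i' : Fin n, i ≠ i' →
      ε / 2 < eucNorm ((ρ • X i + α • softmaxAvg τ X A i) -
        (ρ • X i' + α • softmaxAvg τ X A i')) := by
    rw [eventually_all]
    intro i
    rw [eventually_all]
    intro i'
    by_cases hii : i = i'
    · simp [hii]
    refine eventually_imp_distrib_left.2 fun _ => ?_
    have htend : Tendsto (fun τ => eucNorm ((ρ • X i + α • softmaxAvg τ X A i) -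
        (ρ • X i' + α • softmaxAvg τ X A i'))) (𝓝[>] (0:ℝ))
        (𝓝 (eucNorm ((ρ • X i + α • hardmaxAvg X A i) - (ρ • X i' + α • hardmaxAvg X A i')))) := by
      refine henorm.continuousAt.tendsto.comp ?_
      exact (tendsto_const_nhds.add ((softmaxAvg_tendsto hn X A i).const_smul α)).sub
        (tendsto_const_nhds.add ((softmaxAvg_tendsto hn X A i').const_smul α))
    have hlt : ε / 2 < eucNorm ((ρ • X i + α • hardmaxAvg X A i)
        - (ρ • X i' + α • hardmaxAvg X A i')) :=
      lt_trans (by linarith) (hsep i i' hii)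
    exact htend.eventually (eventually_gt_nhds hlt)
  rw [eventually_nhdsWithin_iff] at key
  rcases Metric.eventually_nhds_iff.1 key with ⟨δ, hδ, hball⟩
  refine ⟨δ / 2, by linarith, fun τ hτ hτ' i i' hii => ?_⟩
  refine hball (y := τ) ?_ hτ i i' hii
  rw [Real.dist_eq, abs_lt]
  constructor <;> linarith
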